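/- Let p be an odd prime. Then the Pauli group P_{1,p} is both just nonabelian and minimal nonabelian: P_{1,p} is nonabelian, every quotient of P_{1,p} by a nontrivial normal subgroup is abelian, and every proper subgroup of P_{1,p} is abelian. -/

import Mathlib

open Matrix

/-- The root of unity `ω = exp(2πi/p)`. -/
noncomputable def omegaP (p : ℕ) : ℂ := Complex.exp (2 * Real.pi * Complex.I / p)

/-- The shift matrix `X_k` on `n` qudits of dimension `p`:
`(X_k)_{u,v} = 1` if `u = v + e_k`, else `0`. -/
def shiftXP (p n : ℕ) (k : Fin n) :
    Matrix (Fin n → ZMod p) (Fin n → ZMod p) ℂ :=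
  Matrix.of fun u v => if u = v + Pi.single k 1 then 1 else 0

/-- The clock matrix `Z_k` on `n` qudits of dimension `p`: diagonal with
`(Z_k)_{v,v} = ω^{(v k).val}`. -/
noncomputable def clockZP (p n : ℕ) (k : Fin n) :
    Matrix (Fin n → ZMod p) (Fin n → ZMod p) ℂ :=
  Matrix.diagonal fun v => omegaP p ^ (v k).val

/-- The Pauli group `P_{n,p}` on `n` qudits of prime dimension `p`: the subgroup of the units
of the matrix ring generated by the scalar matrix `ω·I` and the matrices `X_k`, `Z_k`. -/
noncomputable def PauliGroupP (p n : ℕ) [NeZero p] :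
    Subgroup (Matrix (Fin n → ZMod p) (Fin n → ZMod p) ℂ)ˣ :=
  Subgroup.closure
    {u : (Matrix (Fin n → ZMod p) (Fin n → ZMod p) ℂ)ˣ |
      (u : Matrix (Fin n → ZMod p) (Fin n → ZMod p) ℂ) = omegaP p • 1 ∨
      ∃ k : Fin n,
        (u : Matrix (Fin n → ZMod p) (Fin n → ZMod p) ℂ) = shiftXP p n k ∨
        (u : Matrix (Fin n → ZMod p) (Fin n → ZMod p) ℂ) = clockZP p n k}


set_option linter.unusedSectionVars false

open Matrix

namespace PauliAux

variable (p : ℕ) [hFp : Fact p.Prime]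

lemma homega : IsPrimitiveRoot (omegaP p) p := by
  simpa [omegaP] using Complex.isPrimitiveRoot_exp p hFp.out.ne_zero

noncomputable def e (t : ZMod p) : ℂ := omegaP p ^ t.val

lemma e_add (s t : ZMod p) : e p (s + t) = e p s * e p t := by
  haveI : NeZero p := ⟨hFp.out.ne_zero⟩
  unfold e
  rw [← pow_add, ZMod.val_add, ← pow_eq_pow_mod _ (homega p).pow_eq_one]

lemma e_zero : e p 0 = 1 := by
  haveI : NeZero p := ⟨hFp.out.ne_zero⟩
  simp [e]

lemma e_ne_zero (t : ZMod p) : e p t ≠ 0 := by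
  have h := (homega p).pow_eq_one
  intro h0
  have : omegaP p ≠ 0 := by
    intro hz
    rw [hz, zero_pow hFp.out.ne_zero] at h
    exact zero_ne_one h
  exact this (pow_eq_zero_iff'.mp h0).1

lemma e_inj {s t : ZMod p} (h : e p s = e p t) : s = t := by
  haveI : NeZero p := ⟨hFp.out.ne_zero⟩
  have := (homega p).pow_inj (ZMod.val_lt s) (ZMod.val_lt t) h
  exact ZMod.val_injective p this



abbrev ι := Fin 1 → ZMod p

noncomputable def M (a b c : ZMod p) : Matrix (ι p) (ι p) ℂ :=
  Matrix.of fun u v => if u = v + fun _ => b then e p a * e p (c * v 0) else 0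

lemma M_congr {a b c a' b' c' : ZMod p} (ha : a = a') (hb : b = b') (hc : c = c') :
    M p a b c = M p a' b' c' := by rw [ha, hb, hc]

lemma M_mul (a b c a' b' c' : ZMod p) :
    M p a b c * M p a' b' c' = M p (a + a' + c * b') (b + b') (c + c') := by
  ext u v
  rw [Matrix.mul_apply]
  rw [Finset.sum_eq_single (v + fun _ => b')]
  · simp only [M, Matrix.of_apply]
    have hcond : (u = (v + fun _ => b') + fun _ => b) ↔ (u = v + fun _ => (b + b')) := by
      constructor <;> intro h <;> [skip; skip] <;>
        · rw [h]; funext i; simp [add_assoc, add_comm b' b]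
    by_cases h : u = v + fun _ => (b + b')
    · rw [if_pos (hcond.mpr h), if_pos h]
      rw [if_pos trivial]
      have hv : (v + (fun _ => b') : ι p) 0 = v 0 + b' := rfl
      rw [hv]
      rw [← e_add, ← e_add, ← e_add, ← e_add]
      congr 1
      ring
    · rw [if_neg (fun hh => h (hcond.mp hh)), if_neg h, zero_mul]
  · intro w _ hw
    simp only [M, Matrix.of_apply]
    rw [if_neg hw, mul_zero]
  · intro h
    exact absurd (Finset.mem_univ _) h

lemma M_one : M p 0 0 0 = 1 := by
  ext u v
  simp only [M, Matrix.of_apply, Matrix.one_apply]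
  have : (v + fun _ => (0 : ZMod p)) = v := by funext i; simp
  rw [this]
  by_cases h : u = v <;> simp [h, e_zero]

noncomputable def U (a b c : ZMod p) : (Matrix (ι p) (ι p) ℂ)ˣ where
  val := M p a b c
  inv := M p (c * b - a) (-b) (-c)
  val_inv := by rw [M_mul, ← M_one p]; exact M_congr p (by ring) (by ring) (by ring)
  inv_val := by rw [M_mul, ← M_one p]; exact M_congr p (by ring) (by ring) (by ring)

lemma U_mul (a b c a' b' c' : ZMod p) :
    U p a b c * U p a' b' c' = U p (a + a' + c * b') (b + b') (c + c') :=
  Units.ext (M_mul p a b c a' b' c')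

lemma U_congr {a b c a' b' c' : ZMod p} (ha : a = a') (hb : b = b') (hc : c = c') :
    U p a b c = U p a' b' c' := by rw [ha, hb, hc]

lemma U_one : U p 0 0 0 = 1 := Units.ext (M_one p)

lemma U_inj {a b c a' b' c' : ZMod p} (h : U p a b c = U p a' b' c') :
    a = a' ∧ b = b' ∧ c = c' := by
  haveI : NeZero p := ⟨hFp.out.ne_zero⟩
  have hM : M p a b c = M p a' b' c' := congrArg Units.val h
  -- evaluate at u = fun _ => b, v = 0
  have h1 := congrFun (congrFun hM (fun _ => b)) 0
  simp only [M, Matrix.of_apply] at h1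
  have hz : ((0 : ι p) + fun _ => b) = fun _ => b := by funext i; simp
  have hz' : ((0 : ι p) + fun _ => b') = fun _ => b' := by funext i; simp
  rw [hz, hz', if_pos rfl] at h1
  have h0 : ((0 : ι p) 0 : ZMod p) = 0 := rfl
  rw [h0, mul_zero, mul_zero, e_zero, mul_one, mul_one] at h1
  have hb : b = b' := by
    by_cases hbb : (fun _ => b : ι p) = fun _ => b'
    · exact congrFun hbb 0
    · rw [if_neg hbb] at h1
      exact absurd h1 (e_ne_zero p a)
  subst hb
  rw [if_pos rfl] at h1
  have ha : a = a' := e_inj p h1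
  subst ha
  refine ⟨rfl, rfl, ?_⟩
  -- evaluate at u = fun _ => 1 + b, v = fun _ => 1
  have h2 := congrFun (congrFun hM (fun _ => 1 + b)) (fun _ => 1)
  simp only [M, Matrix.of_apply] at h2
  have hcond : ((fun _ => 1 + b : ι p) = (fun _ => (1:ZMod p)) + fun _ => b) := rfl
  simp only [if_pos hcond, mul_one] at h2
  exact e_inj p (mul_left_cancel₀ (e_ne_zero p a) h2)



lemma sU_eq : ((U p 1 0 0 : (Matrix (ι p) (ι p) ℂ)ˣ) : Matrix (ι p) (ι p) ℂ) = omegaP p • 1 := by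
  haveI : Fact (1 < p) := ⟨hFp.out.one_lt⟩
  show M p 1 0 0 = omegaP p • 1
  ext u v
  simp only [M, Matrix.of_apply, Matrix.smul_apply, Matrix.one_apply, smul_eq_mul]
  have hv : (v + fun _ => (0:ZMod p)) = v := by funext i; simp
  rw [hv]
  by_cases h : u = v <;> simp [h, e, e_zero, ZMod.val_one, zero_mul]

lemma xU_eq : ((U p 0 1 0 : (Matrix (ι p) (ι p) ℂ)ˣ) : Matrix (ι p) (ι p) ℂ) = shiftXP p 1 0 := by
  show M p 0 1 0 = shiftXP p 1 0
  ext u v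
  simp only [M, Matrix.of_apply, shiftXP]
  have hs : (Pi.single (0 : Fin 1) (1:ZMod p)) = fun _ => (1:ZMod p) := by
    funext i
    have hi : i = 0 := Subsingleton.elim _ _
    rw [hi, Pi.single_eq_same]
  rw [hs]
  by_cases h : u = v + fun _ => (1:ZMod p) <;> simp [h, e_zero, zero_mul]

lemma zU_eq : ((U p 0 0 1 : (Matrix (ι p) (ι p) ℂ)ˣ) : Matrix (ι p) (ι p) ℂ) = clockZP p 1 0 := by
  show M p 0 0 1 = clockZP p 1 0
  ext u v
  simp only [M, Matrix.of_apply, clockZP, Matrix.diagonal_apply]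
  have hv : (v + fun _ => (0:ZMod p)) = v := by funext i; simp
  rw [hv]
  by_cases h : u = v
  · subst h; simp [e, e_zero, one_mul, zero_mul]
  · simp [h]

lemma U_s_pow (a : ZMod p) (m : ℕ) : (U p a 0 0) ^ m = U p (m * a) 0 0 := by
  induction m with
  | zero => simpa using (U_one p).symm
  | succ n ih =>
      rw [pow_succ, ih, U_mul]
      exact U_congr p (by push_cast; ring) (by ring) (by ring)

lemma U_x_pow (b : ZMod p) (m : ℕ) : (U p 0 b 0) ^ m = U p 0 (m * b) 0 := by
  induction m with
  | zero => simpa using (U_one p).symm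
  | succ n ih =>
      rw [pow_succ, ih, U_mul]
      exact U_congr p (by ring) (by push_cast; ring) (by ring)

lemma U_z_pow (c : ZMod p) (m : ℕ) : (U p 0 0 c) ^ m = U p 0 0 (m * c) := by
  induction m with
  | zero => simpa using (U_one p).symm
  | succ n ih =>
      rw [pow_succ, ih, U_mul]
      exact U_congr p (by ring) (by ring) (by push_cast; ring)

lemma U_inv (a b c : ZMod p) : (U p a b c)⁻¹ = U p (c * b - a) (-b) (-c) :=
  Units.ext rfl

lemma U_mem (a b c : ZMod p) : U p a b c ∈ PauliGroupP p 1 := by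
  haveI : NeZero p := ⟨hFp.out.ne_zero⟩
  have hs : U p 1 0 0 ∈ PauliGroupP p 1 := Subgroup.subset_closure (Or.inl (sU_eq p))
  have hx : U p 0 1 0 ∈ PauliGroupP p 1 := Subgroup.subset_closure (Or.inr ⟨0, Or.inl (xU_eq p)⟩)
  have hz : U p 0 0 1 ∈ PauliGroupP p 1 := Subgroup.subset_closure (Or.inr ⟨0, Or.inr (zU_eq p)⟩)
  have h1 : U p a 0 0 ∈ PauliGroupP p 1 := by
    have hm := (PauliGroupP p 1).pow_mem hs a.val
    rw [U_s_pow] at hm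
    rwa [show ((a.val : ZMod p) * 1) = a by rw [mul_one]; exact ZMod.natCast_rightInverse a] at hm
  have h2 : U p 0 b 0 ∈ PauliGroupP p 1 := by
    have hm := (PauliGroupP p 1).pow_mem hx b.val
    rw [U_x_pow] at hm
    rwa [show ((b.val : ZMod p) * 1) = b by rw [mul_one]; exact ZMod.natCast_rightInverse b] at hm
  have h3 : U p 0 0 c ∈ PauliGroupP p 1 := by
    have hm := (PauliGroupP p 1).pow_mem hz c.val
    rw [U_z_pow] at hm
    rwa [show ((c.val : ZMod p) * 1) = c by rw [mul_one]; exact ZMod.natCast_rightInverse c] at hm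
  have hmem := (PauliGroupP p 1).mul_mem ((PauliGroupP p 1).mul_mem h1 h2) h3
  have heq : U p a 0 0 * U p 0 b 0 * U p 0 0 c = U p a b c := by
    rw [U_mul, U_mul]
    exact U_congr p (by ring) (by ring) (by ring)
  rwa [heq] at hmem

lemma mem_iff (u : (Matrix (ι p) (ι p) ℂ)ˣ) :
    u ∈ PauliGroupP p 1 ↔ ∃ a b c : ZMod p, u = U p a b c := by
  constructor
  · intro hu
    refine Subgroup.closure_induction ?_ ?_ ?_ ?_ hu
    · rintro x (hx | ⟨k, hx | hx⟩)
      · exact ⟨1, 0, 0, Units.ext (by rw [hx, sU_eq])⟩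
      · have hk : k = 0 := Subsingleton.elim _ _
        subst hk
        exact ⟨0, 1, 0, Units.ext (by rw [hx, xU_eq])⟩
      · have hk : k = 0 := Subsingleton.elim _ _
        subst hk
        exact ⟨0, 0, 1, Units.ext (by rw [hx, zU_eq])⟩
    · exact ⟨0, 0, 0, (U_one p).symm⟩
    · rintro x y _ _ ⟨a, b, c, rfl⟩ ⟨a', b', c', rfl⟩
      exact ⟨_, _, _, U_mul p a b c a' b' c'⟩
    · rintro x _ ⟨a, b, c, rfl⟩
      exact ⟨_, _, _, U_inv p a b c⟩
  · rintro ⟨a, b, c, rfl⟩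
    exact U_mem p a b c

noncomputable def gU (a b c : ZMod p) : ↥(PauliGroupP p 1) := ⟨U p a b c, U_mem p a b c⟩

lemma gU_mul (a b c a' b' c' : ZMod p) :
    gU p a b c * gU p a' b' c' = gU p (a + a' + c * b') (b + b') (c + c') :=
  Subtype.ext (U_mul p a b c a' b' c')

lemma gU_congr {a b c a' b' c' : ZMod p} (ha : a = a') (hb : b = b') (hc : c = c') :
    gU p a b c = gU p a' b' c' := by rw [ha, hb, hc]

lemma gU_one : gU p 0 0 0 = 1 := Subtype.ext (U_one p)

lemma gU_inj {a b c a' b' c' : ZMod p} (h : gU p a b c = gU p a' b' c') :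
    a = a' ∧ b = b' ∧ c = c' := U_inj p (Subtype.ext_iff.mp h)

lemma gU_surj (g : ↥(PauliGroupP p 1)) : ∃ a b c : ZMod p, g = gU p a b c := by
  obtain ⟨a, b, c, h⟩ := (mem_iff p g.1).mp g.2
  exact ⟨a, b, c, Subtype.ext h⟩

lemma gU_s_pow (a : ZMod p) (m : ℕ) : (gU p a 0 0) ^ m = gU p (m * a) 0 0 := by
  refine Subtype.ext ?_
  rw [SubmonoidClass.coe_pow]
  exact U_s_pow p a m

lemma gU_swap (a b c a' b' c' : ZMod p) :
    gU p a b c * gU p a' b' c' = gU p (c * b' - c' * b) 0 0 * (gU p a' b' c' * gU p a b c) := by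
  rw [gU_mul, gU_mul, gU_mul]
  exact gU_congr p (by ring) (by ring) (by ring)

lemma pauli_bij : Function.Bijective
    (fun t : ZMod p × ZMod p × ZMod p => gU p t.1 t.2.1 t.2.2) := by
  constructor
  · rintro ⟨a, b, c⟩ ⟨a', b', c'⟩ h
    obtain ⟨h1, h2, h3⟩ := gU_inj p h
    simp only [Prod.mk.injEq]
    exact ⟨h1, h2, h3⟩
  · intro g
    obtain ⟨a, b, c, rfl⟩ := gU_surj p g
    exact ⟨(a, b, c), rfl⟩

lemma card_pauli : Nat.card ↥(PauliGroupP p 1) = p ^ 3 := by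
  haveI : NeZero p := ⟨hFp.out.ne_zero⟩
  rw [← Nat.card_eq_of_bijective _ (pauli_bij p), Nat.card_prod, Nat.card_prod, Nat.card_zmod]
  ring

lemma finite_pauli : Finite ↥(PauliGroupP p 1) := by
  haveI : NeZero p := ⟨hFp.out.ne_zero⟩
  exact Finite.of_surjective _ (pauli_bij p).2

lemma cen_mem (N : Subgroup ↥(PauliGroupP p 1)) [hNn : N.Normal] (hN : N ≠ ⊥) (t : ZMod p) :
    gU p t 0 0 ∈ N := by
  haveI : NeZero p := ⟨hFp.out.ne_zero⟩
  obtain ⟨⟨g, hgN⟩, hg1⟩ := Subgroup.ne_bot_iff_exists_ne_one.mp hN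
  obtain ⟨a, b, c, rfl⟩ := gU_surj p g
  have key : ∃ t0 : ZMod p, t0 ≠ 0 ∧ gU p t0 0 0 ∈ N := by
    have conj_helper : ∀ b' c' : ZMod p,
        gU p (c' * b - c * b') 0 0 ∈ N := by
      intro b' c'
      set h := gU p 0 b' c' with hh
      have hswap := gU_swap p 0 b' c' a b c
      have heq : gU p (c' * b - c * b') 0 0 = (h * gU p a b c * h⁻¹) * (gU p a b c)⁻¹ := by
        have := eq_mul_inv_of_mul_eq hswap.symm
        rw [this, hh]
        group
      rw [heq]
      exact N.mul_mem (hNn.conj_mem _ hgN h) (N.inv_mem hgN)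
    by_cases hb : b = 0
    · by_cases hc : c = 0
      · subst hb; subst hc
        refine ⟨a, fun ha => hg1 ?_, hgN⟩
        subst ha
        exact Subtype.ext (gU_one p)
      · refine ⟨-c, ?_, ?_⟩
        · simpa using hc
        · have := conj_helper 1 0
          simpa using this
    · refine ⟨b, hb, ?_⟩
      have := conj_helper 0 1
      simpa using this
  obtain ⟨t0, ht0, ht0N⟩ := key
  have hpow := N.pow_mem ht0N (t * t0⁻¹).val
  rw [gU_s_pow] at hpow
  rwa [show ((t * t0⁻¹).val : ZMod p) * t0 = t by
    rw [ZMod.natCast_rightInverse (t * t0⁻¹), mul_assoc, inv_mul_cancel₀ ht0, mul_one]] at hpow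

end PauliAux

/-- For an odd prime `p`, the Pauli group `P_{1,p}` is both just nonabelian
and minimal nonabelian: it is nonabelian, every quotient by a nontrivial normal subgroup is
abelian, and every proper subgroup is abelian. -/
theorem pauli_one_p_just_and_minimal_nonabelian (p : ℕ) [Fact p.Prime] (hp : p ≠ 2) :
    (∃ a b : ↥(PauliGroupP p 1), a * b ≠ b * a) ∧
    (∀ (N : Subgroup ↥(PauliGroupP p 1)) [N.Normal], N ≠ ⊥ →
      ∀ x y : ↥(PauliGroupP p 1) ⧸ N, x * y = y * x) ∧
    (∀ H : Subgroup ↥(PauliGroupP p 1), H ≠ ⊤ → ∀ a b : ↥H, a * b = b * a) := by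
  haveI hFp : Fact p.Prime := inferInstance
  haveI : NeZero p := ⟨hFp.out.ne_zero⟩
  haveI : Fact (1 < p) := ⟨hFp.out.one_lt⟩
  haveI : Finite ↥(PauliGroupP p 1) := PauliAux.finite_pauli p
  open PauliAux in
  refine ⟨⟨gU p 0 0 1, gU p 0 1 0, ?_⟩, ?_, ?_⟩
  · intro h
    rw [gU_mul, gU_mul] at h
    have h1 := (gU_inj p h).1
    simp at h1
  · intro N hNn hN x y
    refine QuotientGroup.induction_on x fun g => QuotientGroup.induction_on y fun h => ?_
    obtain ⟨a, b, c, rfl⟩ := gU_surj p g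
    obtain ⟨a', b', c', rfl⟩ := gU_surj p h
    rw [← QuotientGroup.mk_mul, ← QuotientGroup.mk_mul, gU_swap p a b c a' b' c',
      QuotientGroup.mk_mul, (QuotientGroup.eq_one_iff _).mpr (cen_mem p N hN _), one_mul]
  · intro H hH a b
    have hdvd : Nat.card ↥H ∣ p ^ 3 := (card_pauli p) ▸ Subgroup.card_subgroup_dvd_card H
    obtain ⟨k, hk3, hcard⟩ := (Nat.dvd_prime_pow hFp.out).mp hdvd
    interval_cases k
    · have hc1 : Nat.card ↥H = 1 := by rw [hcard, pow_zero]
      haveI := (Nat.card_eq_one_iff_unique.mp hc1).1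
      exact Subsingleton.elim _ _
    · haveI := isCyclic_of_prime_card (α := ↥H) (p := p) (by rwa [pow_one] at hcard)
      letI : CommGroup ↥H := IsCyclic.commGroup
      exact mul_comm a b
    · exact IsPGroup.commutative_of_card_eq_prime_sq hcard a b
    · exact absurd (Subgroup.eq_top_of_card_eq H (hcard.trans (card_pauli p).symm)) hH
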